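/- If αᵢ > 0 for all i, the (n+1)×(n+1) matrix M with first row (0, -α₁, …, -αₙ), entry M[1][0] = 1, M[i][i] = -1 for i = 1,…,n, M[i+1][i] = 1 for i = 1,…,n-1, and zeros elsewhere, is nonsingular; hence the leader-follower protocol with k_α = 1 has a unique equilibrium. -/

import Mathlib

open Matrix

/-- The (n+1)×(n+1) system matrix M of the leader-follower protocol (k_α = 1),
with first row (0, -α₁, …, -αₙ), M[1][0] = 1, M[i][i] = -1 and M[i+1][i] = 1,
is nonsingular; hence the protocol has a unique equilibrium. -/
theorem stmt10 (n : ℕ) (hn : 1 ≤ n)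
    (α : Fin n → ℝ) (hα : ∀ i, 0 < α i)
    (M : Matrix (Fin (n + 1)) (Fin (n + 1)) ℝ)
    (hM : ∀ i j : Fin (n + 1), M i j =
      if hi : (i : ℕ) = 0 then
        (if hj : (j : ℕ) = 0 then 0 else -(α ⟨(j : ℕ) - 1, by omega⟩))
      else
        if (j : ℕ) = (i : ℕ) then -1
        else if (j : ℕ) + 1 = (i : ℕ) then 1 else 0) :
    M.det ≠ 0 ∧
      ∀ x y : Fin (n + 1) → ℝ, M.mulVec x = M.mulVec y → x = y := by
  have key : ∀ x : Fin (n + 1) → ℝ, M.mulVec x = 0 → x = 0 := by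
    intro x hx
    have hrow : ∀ i : Fin (n + 1), ∀ hi : (i : ℕ) ≠ 0,
        x ⟨(i : ℕ) - 1, by omega⟩ = x i := by
      intro i hi
      have h := congrFun hx i
      rw [Matrix.mulVec, dotProduct] at h
      set ip : Fin (n + 1) := ⟨(i : ℕ) - 1, by omega⟩ with hip
      have hipv : (ip : ℕ) = (i : ℕ) - 1 := rfl
      have hne : ip ≠ i := Fin.ne_of_val_ne (by omega)
      have hM' : ∀ j, M i j * x j =
          (if j = i then -x i else 0) + (if j = ip then x ip else 0) := by
        intro j
        rw [hM]
        by_cases hji : j = i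
        · rw [hji, dif_neg hi, if_pos rfl, if_pos rfl, if_neg (Ne.symm hne)]
          ring
        · have h1 : (j : ℕ) ≠ (i : ℕ) := fun hc => hji (Fin.ext hc)
          by_cases hjp : j = ip
          · have h2 : (j : ℕ) + 1 = (i : ℕ) := by
              have : (j : ℕ) = (ip : ℕ) := by rw [hjp]
              omega
            rw [dif_neg hi, if_neg h1, if_pos h2, if_neg hji, if_pos hjp, hjp]
            ring
          · have h2 : (j : ℕ) + 1 ≠ (i : ℕ) := by
              intro hc
              exact hjp (Fin.ext (by omega))
            rw [dif_neg hi, if_neg h1, if_neg h2, if_neg hji, if_neg hjp]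
            ring
      rw [Finset.sum_congr rfl (fun j _ => hM' j)] at h
      rw [Finset.sum_add_distrib, Finset.sum_ite_eq', Finset.sum_ite_eq'] at h
      simp only [Finset.mem_univ, if_true, Pi.zero_apply] at h
      linarith
    have hx0 : ∀ k : ℕ, ∀ hk : k < n + 1, x ⟨k, hk⟩ = x 0 := by
      intro k
      induction k with
      | zero => intro hk; rfl
      | succ m ih =>
        intro hk
        have := hrow ⟨m + 1, hk⟩ (by simp)
        simp only at this
        rw [← this]
        exact ih (by omega)
    have h0 := congrFun hx 0
    rw [Matrix.mulVec, dotProduct] at h0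
    have hsum : ∀ j : Fin (n + 1), M 0 j * x j =
        (if hj : (j : ℕ) = 0 then 0 else -(α ⟨(j : ℕ) - 1, by omega⟩)) * x 0 := by
      intro j
      rw [hM]
      have h00 : ((0 : Fin (n + 1)) : ℕ) = 0 := rfl
      rw [dif_pos h00]
      rcases eq_or_ne ((j : ℕ)) 0 with hj | hj
      · simp [hj]
      · rw [dif_neg hj]
        have hxj : x j = x 0 := by
          have := hx0 (j : ℕ) j.isLt
          simpa using this
        rw [hxj]
    rw [Finset.sum_congr rfl (fun j _ => hsum j)] at h0
    rw [← Finset.sum_mul] at h0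
    have hsum2 : (∑ j : Fin (n + 1),
        (if hj : (j : ℕ) = 0 then (0:ℝ) else -(α ⟨(j : ℕ) - 1, by omega⟩)))
        = -(∑ i : Fin n, α i) := by
      rw [Fin.sum_univ_succ]
      rw [dif_pos (show ((0 : Fin (n + 1)) : ℕ) = 0 from rfl)]
      simp only [Fin.val_succ]
      rw [zero_add, ← Finset.sum_neg_distrib]
      apply Finset.sum_congr rfl
      intro j _
      rw [dif_neg (by omega)]
      congr 1
    rw [hsum2] at h0
    simp only [Pi.zero_apply] at h0
    haveI : Nonempty (Fin n) := Fin.pos_iff_nonempty.mp hn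
    have hpos : 0 < ∑ i : Fin n, α i :=
      Finset.sum_pos (fun i _ => hα i) Finset.univ_nonempty
    have hx00 : x 0 = 0 := by
      rcases mul_eq_zero.mp h0 with h | h
      · exfalso; linarith
      · exact h
    funext j
    have := hx0 j j.isLt
    simp only [Fin.eta] at this
    rw [this, hx00]
    rfl
  have hdet : M.det ≠ 0 := by
    intro h
    obtain ⟨v, hv, hmv⟩ := Matrix.exists_mulVec_eq_zero_iff.mpr h
    exact hv (key v hmv)
  refine ⟨hdet, fun x y hxy => ?_⟩
  have h1 : M.mulVec (x - y) = 0 := by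
    rw [Matrix.mulVec_sub, hxy, sub_self]
  exact sub_eq_zero.mp (key _ h1)
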